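/- arXiv:2407.10514 — 2 statements merged into one kernel-verified Lean document; each statement's English description precedes it below -/
import Mathlib

section
/- Let n be a positive integer, δ ∈ {0, 1}, and β ∈ ℂ with |β| ≥ (R₀ + ω₀^δ)(1 + e²)^{(3−n)/2}/(√2 e)^{1−n}. If p ∈ ℋ satisfies p(z) ≠ 0 on 𝔻 and (p(z))^δ + β z p′(z)/(p(z))^n ≺ 𝔅(z), then p(z) ≺ 𝔅(z). -/
open Complex

noncomputable section

/-- The open unit disk in the complex plane. -/
def unitDisk : Set ℂ := Metric.ball 0 1

/-- `f` is subordinate to `g` on the unit disk: there is an analytic Schwarz function `w`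
with `w 0 = 0`, `|w z| < 1` on the disk, and `f = g ∘ w` on the disk. -/
def Subord (f g : ℂ → ℂ) : Prop :=
  ∃ w : ℂ → ℂ, DifferentiableOn ℂ w unitDisk ∧ w 0 = 0 ∧
    (∀ z ∈ unitDisk, ‖w z‖ < 1) ∧ ∀ z ∈ unitDisk, f z = g (w z)

/-- The function `𝔅(z) = √(1 + tanh z)` (principal branch). -/
def bean (z : ℂ) : ℂ := (1 + Complex.tanh z) ^ ((1 : ℂ) / 2)

/-- `R₀ = e √(2/(e² - 1))`. -/
def R₀ : ℝ := Real.exp 1 * Real.sqrt (2 / (Real.exp 1 ^ 2 - 1))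

/-- `ω₀ = max_{θ ∈ [0, 2π)} |𝔅(e^{iθ})|`. -/
def ω₀ : ℝ :=
  sSup ((fun θ : ℝ => ‖bean (Complex.exp (θ * Complex.I))‖) '' Set.Ico 0 (2 * Real.pi))

/-- Compatibility: the complex absolute value, as the norm. -/
def Complex.abs : AbsoluteValue ℂ ℝ where
  toFun z := ‖z‖
  map_mul' := norm_mul
  nonneg' := norm_nonneg
  eq_zero' _ := norm_eq_zero
  add_le' := norm_add_le

lemma Complex.norm_eq_abs (z : ℂ) : ‖z‖ = Complex.abs z := rfl
lemma Complex.sq_abs (z : ℂ) : Complex.abs z ^ 2 = Complex.normSq z := Complex.sq_norm z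
lemma Complex.abs_ofReal (r : ℝ) : Complex.abs (r : ℂ) = |r| :=
  (Complex.norm_real r).trans (Real.norm_eq_abs r)
lemma Complex.abs_cpow_real (x : ℂ) (y : ℝ) : Complex.abs (x ^ (y : ℂ)) = Complex.abs x ^ y :=
  Complex.norm_cpow_real x y
lemma Complex.abs_exp_ofReal_mul_I (x : ℝ) : Complex.abs (Complex.exp (x * I)) = 1 :=
  Complex.norm_exp_ofReal_mul_I x
lemma Complex.abs_re_le_abs (z : ℂ) : |z.re| ≤ Complex.abs z := Complex.abs_re_le_norm z
lemma Complex.abs_im_le_abs (z : ℂ) : |z.im| ≤ Complex.abs z := Complex.abs_im_le_norm z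
lemma Complex.continuous_abs : Continuous Complex.abs := continuous_norm

section helpers
open Metric


-- numeric: cos 1 lower bound
lemma cos_one_gt : (0.524 : ℝ) < Real.cos 1 := by
  have hπ₁ := Real.pi_gt_d6
  have hπ₂ := Real.pi_lt_d6
  have hx : (0 : ℝ) < Real.pi / 2 - 1 := by nlinarith
  have hx1 : Real.pi / 2 - 1 ≤ 1 := by nlinarith
  have h := Real.sin_gt_sub_cube hx
  rw [Real.sin_pi_div_two_sub] at h
  set x : ℝ := Real.pi / 2 - 1 with hxdef
  have hxl : (0.570796 : ℝ) < x := by rw [hxdef]; nlinarith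
  have hxu : x ≤ 0.5708 := by rw [hxdef]; nlinarith
  have hcube : x^3 ≤ (0.5708:ℝ)^3 := by
    have := pow_le_pow_left₀ (by positivity) hxu 3
    simpa using this
  nlinarith

lemma sinh_one_lt : Real.sinh 1 < 1.18 := by
  rw [Real.sinh_eq]
  have h1 := Real.exp_one_lt_d9
  have h2 := Real.exp_one_gt_d9
  have h3 : Real.exp (-1) = (Real.exp 1)⁻¹ := by
    rw [Real.exp_neg]
  have h4 : (0.3678 : ℝ) < Real.exp (-1) := by
    rw [h3]
    rw [lt_inv_comm₀ (by norm_num) (Real.exp_pos 1)]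
    nlinarith
  nlinarith

lemma abs_tanh_le {ζ : ℂ} (hζ : Complex.abs ζ ≤ 1) : Complex.abs (Complex.tanh ζ) ≤ 2.79 := by
  set x := ζ.re with hxd
  set y := ζ.im with hyd
  have hx : |x| ≤ 1 := le_trans (Complex.abs_re_le_abs ζ) hζ
  have hy : |y| ≤ 1 := le_trans (Complex.abs_im_le_abs ζ) hζ
  have hζeq : ζ = (x : ℂ) + (y : ℂ) * I := (Complex.re_add_im ζ).symm
  have hsinh : Complex.sinh ζ = ((Real.sinh x * Real.cos y : ℝ) : ℂ) +
      ((Real.cosh x * Real.sin y : ℝ) : ℂ) * I := by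
    rw [hζeq, Complex.sinh_add, Complex.sinh_mul_I, Complex.cosh_mul_I]
    push_cast [← Complex.ofReal_sinh, ← Complex.ofReal_cosh, ← Complex.ofReal_sin,
      ← Complex.ofReal_cos]
    ring
  have hcosh : Complex.cosh ζ = ((Real.cosh x * Real.cos y : ℝ) : ℂ) +
      ((Real.sinh x * Real.sin y : ℝ) : ℂ) * I := by
    rw [hζeq, Complex.cosh_add, Complex.sinh_mul_I, Complex.cosh_mul_I]
    push_cast [← Complex.ofReal_sinh, ← Complex.ofReal_cosh, ← Complex.ofReal_sin,
      ← Complex.ofReal_cos]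
    ring
  have hs2 : (Complex.abs (Complex.sinh ζ))^2 = Real.sinh x ^2 + Real.sin y ^2 := by
    rw [Complex.sq_abs, hsinh, Complex.normSq_add_mul_I]
    have hc := Real.sin_sq_add_cos_sq y
    have hc2 := Real.cosh_sq x
    nlinarith
  have hc2 : (Complex.abs (Complex.cosh ζ))^2 = Real.sinh x ^2 + Real.cos y ^2 := by
    rw [Complex.sq_abs, hcosh, Complex.normSq_add_mul_I]
    have hc := Real.sin_sq_add_cos_sq y
    have hc2 := Real.cosh_sq x
    nlinarith
  -- bounds
  have hsinh1 : Real.sinh x ^ 2 ≤ Real.sinh 1 ^ 2 := by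
    have h1 : Real.sinh x ≤ Real.sinh 1 := Real.sinh_le_sinh.2 (le_trans (le_abs_self x) hx)
    have h2 : Real.sinh (-1) ≤ Real.sinh x := Real.sinh_le_sinh.2 (by
      have := neg_abs_le x; linarith)
    rw [Real.sinh_neg] at h2
    nlinarith
  have hsone : Real.sinh 1 < 1.18 := sinh_one_lt
  have hsnn : (0:ℝ) ≤ Real.sinh 1 := by
    have : Real.sinh 0 ≤ Real.sinh 1 := Real.sinh_le_sinh.2 (by norm_num)
    simpa [Real.sinh_zero] using this
  have hsinh1' : Real.sinh x ^ 2 ≤ 1.3924 := by nlinarith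
  have hcosy : (0.524 : ℝ) < Real.cos y := by
    have h1 : Real.cos 1 ≤ Real.cos |y| :=
      Real.cos_le_cos_of_nonneg_of_le_pi (abs_nonneg y) (by linarith [Real.pi_gt_three]) hy
    rw [Real.cos_abs] at h1
    linarith [cos_one_gt]
  have hsin2 : Real.sin y ^ 2 ≤ 1 - Real.cos y ^ 2 := by
    have := Real.sin_sq_add_cos_sq y; linarith
  -- |sinh ζ| ≤ 1.456
  have hsa : Complex.abs (Complex.sinh ζ) ≤ 1.456 := by
    nlinarith [Complex.abs.nonneg (Complex.sinh ζ)]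
  have hca : (0.524:ℝ) ≤ Complex.abs (Complex.cosh ζ) := by
    nlinarith [Complex.abs.nonneg (Complex.cosh ζ)]
  rw [Complex.tanh_eq_sinh_div_cosh, map_div₀]
  rw [div_le_iff₀ (by linarith)]
  nlinarith

lemma abs_bean_le {ζ : ℂ} (hζ : Complex.abs ζ ≤ 1) : Complex.abs (bean ζ) ≤ 39/20 := by
  have h1 : Complex.abs (1 + Complex.tanh ζ) ≤ 3.79 := by
    calc Complex.abs (1 + Complex.tanh ζ) ≤ 1 + Complex.abs (Complex.tanh ζ) := by
          simpa using Complex.abs.add_le 1 (Complex.tanh ζ)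
      _ ≤ 3.79 := by linarith [abs_tanh_le hζ]
  have h0 : (0:ℝ) ≤ Complex.abs (1 + Complex.tanh ζ) := Complex.abs.nonneg _
  have : Complex.abs (bean ζ) = Complex.abs (1 + Complex.tanh ζ) ^ ((1:ℝ)/2) := by
    rw [bean]
    rw [show ((1:ℂ)/2) = (((1:ℝ)/2 : ℝ) : ℂ) by norm_num]
    exact Complex.abs_cpow_real _ _
  rw [this]
  calc Complex.abs (1 + Complex.tanh ζ) ^ ((1:ℝ)/2) ≤ (3.79 : ℝ) ^ ((1:ℝ)/2) :=
        Real.rpow_le_rpow h0 h1 (by norm_num)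
    _ ≤ 39/20 := by
        rw [show ((1:ℝ)/2) = ((2:ℝ)⁻¹) by norm_num, Real.rpow_inv_le_iff_of_pos (by norm_num) (by norm_num) (by norm_num)]
        norm_num


lemma R0_ge : (3/2 : ℝ) ≤ R₀ := by
  have h1 := Real.exp_one_lt_d9
  have h2 := Real.exp_one_gt_d9
  have hden : (0:ℝ) < Real.exp 1 ^ 2 - 1 := by nlinarith
  have hs : (3/2 : ℝ) / Real.exp 1 ≤ Real.sqrt (2 / (Real.exp 1 ^ 2 - 1)) := by
    rw [Real.le_sqrt (by positivity) (by positivity)]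
    rw [div_pow, div_le_div_iff₀ (by positivity) hden]
    nlinarith
  have := mul_le_mul_of_nonneg_left hs (le_of_lt (Real.exp_pos 1))
  rw [R₀]
  calc (3/2 : ℝ) = Real.exp 1 * ((3/2)/Real.exp 1) := by
        field_simp
    _ ≤ Real.exp 1 * Real.sqrt (2 / (Real.exp 1 ^ 2 - 1)) := this

lemma omega0_ge_one : (1:ℝ) ≤ ω₀ := by
  rw [ω₀]
  have hmem : (fun θ : ℝ => Complex.abs (bean (Complex.exp (θ * Complex.I)))) 0 ∈
      ((fun θ : ℝ => Complex.abs (bean (Complex.exp (θ * Complex.I)))) '' Set.Ico 0 (2 * Real.pi)) := by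
    exact Set.mem_image_of_mem _ (by constructor <;> [rfl; positivity])
  have hbdd : BddAbove ((fun θ : ℝ => Complex.abs (bean (Complex.exp (θ * Complex.I)))) '' Set.Ico 0 (2 * Real.pi)) := by
    refine ⟨39/20, ?_⟩
    rintro x ⟨θ, -, rfl⟩
    have : Complex.abs (Complex.exp ((θ:ℂ) * Complex.I)) = 1 := Complex.abs_exp_ofReal_mul_I θ
    exact abs_bean_le (le_of_eq this)
  have hval : (1:ℝ) ≤ (fun θ : ℝ => Complex.abs (bean (Complex.exp (θ * Complex.I)))) 0 := by
    simp only
    rw [show ((0:ℝ):ℂ) * Complex.I = 0 by simp, Complex.exp_zero]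
    rw [bean]
    have htanh : Complex.tanh 1 = ((Real.tanh 1 : ℝ) : ℂ) := by
      rw [Complex.ofReal_tanh]; norm_num
    rw [htanh]
    have h1 : (1:ℂ) + ((Real.tanh 1 : ℝ) : ℂ) = (((1 + Real.tanh 1 : ℝ)) : ℂ) := by push_cast; ring
    rw [h1]
    have htnn : (0:ℝ) ≤ Real.tanh 1 := by
      rw [Real.tanh_eq_sinh_div_cosh]
      positivity
    have habs : Complex.abs (((1 + Real.tanh 1 : ℝ)) : ℂ) ^ ((1:ℝ)/2) = Complex.abs ((((1 + Real.tanh 1 : ℝ)) : ℂ) ^ ((1:ℂ)/2)) := by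
      rw [show ((1:ℂ)/2) = (((1:ℝ)/2 : ℝ) : ℂ) by norm_num]
      rw [Complex.abs_cpow_real]
    rw [← habs]
    rw [Complex.abs_ofReal, _root_.abs_of_nonneg (by linarith : (0:ℝ) ≤ 1 + Real.tanh 1)]
    exact Real.one_le_rpow (by linarith) (by norm_num)
  calc (1:ℝ) ≤ _ := hval
    _ ≤ _ := le_csSup hbdd hmem

lemma beta_lower (n : ℕ) (hn : 0 < n) (δ : ℕ) (hδ : δ = 0 ∨ δ = 1) (β : ℂ)
    (hβ : (R₀ + ω₀ ^ δ) * (1 + Real.exp 1 ^ 2) ^ ((3 - (n : ℝ)) / 2) /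
        (Real.sqrt 2 * Real.exp 1) ^ (1 - (n : ℝ)) ≤ Complex.abs β) :
    (83/4 : ℝ) * (13/10 : ℝ)^(n-1) ≤ Complex.abs β := by
  have h1 := Real.exp_one_lt_d9
  have h2 := Real.exp_one_gt_d9
  set E := Real.exp 1 with hE
  set X : ℝ := 1 + E^2 with hX
  have hXpos : (0:ℝ) < X := by positivity
  have hX83 : (83/10 : ℝ) ≤ X := by nlinarith
  set b : ℝ := Real.sqrt 2 * E with hb
  have hbpos : (0:ℝ) < b := by
    have : (0:ℝ) < Real.sqrt 2 := Real.sqrt_pos.2 (by norm_num)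
    positivity
  set c : ℝ := X ^ ((1:ℝ)/2) with hc
  have hcpos : (0:ℝ) < c := Real.rpow_pos_of_pos hXpos _
  have hc2 : c^2 = X := by
    rw [hc, ← Real.rpow_natCast (X ^ ((1:ℝ)/2)) 2, ← Real.rpow_mul (le_of_lt hXpos)]
    norm_num
  set t : ℝ := ((n-1 : ℕ) : ℝ) with ht
  have htnn : (0:ℝ) ≤ t := Nat.cast_nonneg _
  have hnt : (n:ℝ) = t + 1 := by
    rw [ht]
    rw [Nat.cast_sub hn]
    push_cast; ring
  -- rewrite the rpow expressions
  have hrw1 : X ^ ((3 - (n : ℝ)) / 2) = X * (c ^ t)⁻¹ := by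
    have e1 : (3 - (n : ℝ)) / 2 = 1 + (-(t/2)) := by rw [hnt]; ring
    rw [e1, Real.rpow_add hXpos, Real.rpow_one, Real.rpow_neg (le_of_lt hXpos)]
    congr 1
    rw [hc, ← Real.rpow_mul (le_of_lt hXpos)]
    congr 1
    ring
  have hrw2 : b ^ (1 - (n : ℝ)) = (b ^ t)⁻¹ := by
    have e1 : 1 - (n:ℝ) = -t := by rw [hnt]; ring
    rw [e1, Real.rpow_neg (le_of_lt hbpos)]
  have hbt : (0:ℝ) < b ^ t := Real.rpow_pos_of_pos hbpos _
  have hct : (0:ℝ) < c ^ t := Real.rpow_pos_of_pos hcpos _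
  have hA : (5/2 : ℝ) ≤ R₀ + ω₀ ^ δ := by
    have h3 := R0_ge
    have h4 : (1:ℝ) ≤ ω₀ ^ δ := by
      rcases hδ with h | h <;> rw [h]
      · norm_num
      · simpa using omega0_ge_one
    linarith
  have hbc : (13/10 : ℝ) ≤ b / c := by
    rw [le_div_iff₀ hcpos]
    nlinarith [Real.sq_sqrt (by norm_num : (0:ℝ) ≤ 2), Real.sqrt_nonneg 2, hc2, hcpos]
  have hratio : ((13:ℝ)/10) ^ (n-1) ≤ (b/c) ^ t := by
    rw [ht, Real.rpow_natCast]
    exact pow_le_pow_left₀ (by norm_num) hbc _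
  have key : (83/4 : ℝ) * (13/10 : ℝ)^(n-1) ≤
      (R₀ + ω₀ ^ δ) * X ^ ((3 - (n : ℝ)) / 2) / b ^ (1 - (n : ℝ)) := by
    rw [hrw1, hrw2]
    have e2 : (R₀ + ω₀ ^ δ) * (X * (c ^ t)⁻¹) / (b ^ t)⁻¹ =
        (R₀ + ω₀ ^ δ) * X * ((b/c) ^ t) := by
      rw [Real.div_rpow (le_of_lt hbpos) (le_of_lt hcpos)]
      field_simp
    rw [e2]
    have h5 : (0:ℝ) ≤ (13/10 : ℝ)^(n-1) := by positivity
    calc (83/4 : ℝ) * (13/10 : ℝ)^(n-1) = (5/2) * (83/10) * (13/10 : ℝ)^(n-1) := by ring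
      _ ≤ (R₀ + ω₀ ^ δ) * X * ((b/c) ^ t) := by
          apply mul_le_mul
          · apply mul_le_mul hA hX83 (by norm_num) (by linarith)
          · exact hratio
          · exact h5
          · nlinarith
  exact le_trans key hβ


lemma improvement (n : ℕ) (hn : 0 < n) (δ : ℕ) (hδ : δ = 0 ∨ δ = 1) (β : ℂ)
    (hβ' : (83/4:ℝ) * (13/10:ℝ)^(n-1) ≤ Complex.abs β)
    (p : ℂ → ℂ) (hp : DifferentiableOn ℂ p unitDisk) (hp0 : p 0 = 1)
    (hpne : ∀ z ∈ unitDisk, p z ≠ 0)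
    (w₀ : ℂ → ℂ) (hw₀lt : ∀ z ∈ unitDisk, Complex.abs (w₀ z) < 1)
    (hw₀eq : ∀ z ∈ unitDisk, p z ^ δ + β * (z * deriv p z) / p z ^ n = bean (w₀ z))
    (ρ : ℝ) (hρ0 : 0 ≤ ρ) (hρ : ρ ≤ 3/10) (m : ℝ) (hm0 : 0 < m) (hm1 : m < 1)
    (hyp : ∀ z ∈ Metric.ball (0:ℂ) m, Complex.abs (p z - 1) ≤ ρ) :
    ∀ z ∈ Metric.ball (0:ℂ) m, Complex.abs (p z - 1) ≤ (3+ρ)*(1+ρ)*4/83 := by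
  have hβpos : (0:ℝ) < Complex.abs β := lt_of_lt_of_le (by positivity) hβ'
  have hβne : β ≠ 0 := by
    intro hc; rw [hc] at hβpos; simp at hβpos
  have hopen : IsOpen unitDisk := Metric.isOpen_ball
  have hball : Metric.ball (0:ℂ) m ⊆ unitDisk := Metric.ball_subset_ball (le_of_lt hm1)
  set q : ℂ → ℂ := fun z => deriv p z / p z ^ n with hq
  have hqd : DifferentiableOn ℂ q unitDisk := by
    have hderiv : DifferentiableOn ℂ (deriv p) unitDisk :=
      ((hp.analyticOnNhd hopen).deriv).differentiableOn
    exact hderiv.div (hp.pow n) fun z hz => pow_ne_zero n (hpne z hz)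
  set h : ℂ → ℂ := fun z => β * z * q z with hh
  have hhd : DifferentiableOn ℂ h (Metric.ball 0 m) := by
    apply DifferentiableOn.mul
    · exact ((differentiable_id.const_mul β).differentiableOn)
    · exact hqd.mono hball
  have hid : ∀ z ∈ unitDisk, h z = bean (w₀ z) - p z ^ δ := by
    intro z hz
    have hpn : p z ^ n ≠ 0 := pow_ne_zero n (hpne z hz)
    have h1 := hw₀eq z hz
    have h2 : h z = β * (z * deriv p z) / p z ^ n := by
      rw [hh, hq]; ring
    rw [h2, ← h1]; ring
  have habsp : ∀ z ∈ Metric.ball (0:ℂ) m, Complex.abs (p z ^ δ) ≤ 1 + ρ := by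
    intro z hz
    rcases hδ with h' | h' <;> rw [h']
    · simpa using hρ0
    · rw [pow_one]
      calc Complex.abs (p z) = Complex.abs (p z - 1 + 1) := by ring_nf
        _ ≤ Complex.abs (p z - 1) + 1 := by
            simpa using Complex.abs.add_le (p z - 1) 1
        _ ≤ 1 + ρ := by linarith [hyp z hz]
  have hhb : ∀ z ∈ Metric.ball (0:ℂ) m, Complex.abs (h z) < 3 + ρ := by
    intro z hz
    rw [hid z (hball hz)]
    calc Complex.abs (bean (w₀ z) - p z ^ δ)
        ≤ Complex.abs (bean (w₀ z)) + Complex.abs (p z ^ δ) := by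
          simpa [Complex.norm_eq_abs] using norm_sub_le (bean (w₀ z)) (p z ^ δ)
      _ ≤ 39/20 + (1 + ρ) := by
          have := abs_bean_le (le_of_lt (hw₀lt z (hball hz)))
          linarith [habsp z hz]
      _ < 3 + ρ := by linarith
  have h0 : h 0 = 0 := by simp [hh]
  have hmaps : Set.MapsTo h (Metric.ball 0 m) (Metric.ball (h 0) (3+ρ)) := by
    intro z hz
    rw [Metric.mem_ball, h0, dist_zero_right]
    exact hhb z hz
  have hschwarz : ∀ z ∈ Metric.ball (0:ℂ) m, ‖dslope h 0 z‖ ≤ (3+ρ)/m :=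
    fun z hz => Complex.norm_dslope_le_div_of_mapsTo_ball hhd (hmaps.mono_right Metric.ball_subset_closedBall) hz
  have hq0 : dslope h 0 0 = β * q 0 := by
    rw [dslope_same]
    have hqat : DifferentiableAt ℂ q 0 := by
      have h0m : (0:ℂ) ∈ unitDisk := by
        rw [unitDisk]; simp
      exact hqd.differentiableAt (hopen.mem_nhds h0m)
    have hd1 : HasDerivAt (fun z : ℂ => β * z) β 0 := by
      simpa using (hasDerivAt_id (0:ℂ)).const_mul β
    have hd2 : HasDerivAt q (deriv q 0) 0 := hqat.hasDerivAt
    have := hd1.mul hd2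
    simp only [mul_zero, zero_mul, add_zero] at this
    have h2 : HasDerivAt h (β * q 0) 0 := by
      exact this
    exact h2.deriv
  have hqb : ∀ z ∈ Metric.ball (0:ℂ) m, Complex.abs (q z) ≤ (3+ρ)/(m * Complex.abs β) := by
    intro z hz
    have key : Complex.abs (q z) = ‖dslope h 0 z‖ / Complex.abs β := by
      rcases eq_or_ne z 0 with rfl | hz0
      · rw [hq0]
        simp only [norm_mul, Complex.norm_eq_abs]
        field_simp
      · rw [dslope_of_ne _ hz0, slope_def_field]
        rw [h0, sub_zero, sub_zero, hh]
        simp only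
        rw [show β * z * q z / z = β * q z by field_simp]
        simp only [norm_mul, Complex.norm_eq_abs]
        field_simp
    rw [key]
    calc ‖dslope h 0 z‖ / Complex.abs β ≤ ((3+ρ)/m) / Complex.abs β := by
          gcongr
          exact hschwarz z hz
      _ = (3+ρ)/(m * Complex.abs β) := by rw [div_div]
  have hpb : ∀ z ∈ Metric.ball (0:ℂ) m, Complex.abs (p z) ≤ 1 + ρ := by
    intro z hz
    calc Complex.abs (p z) = Complex.abs (p z - 1 + 1) := by ring_nf
      _ ≤ Complex.abs (p z - 1) + 1 := by simpa using Complex.abs.add_le (p z - 1) 1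
      _ ≤ 1 + ρ := by linarith [hyp z hz]
  have hp'b : ∀ z ∈ Metric.ball (0:ℂ) m,
      ‖deriv p z‖ ≤ (3+ρ)/(m * Complex.abs β) * (1+ρ)^n := by
    intro z hz
    have hpn : p z ^ n ≠ 0 := pow_ne_zero n (hpne z (hball hz))
    have : deriv p z = q z * p z ^ n := by
      rw [hq]; field_simp
    rw [this]
    rw [norm_mul]
    have h1 : ‖p z ^ n‖ ≤ (1+ρ)^n := by
      rw [norm_pow]
      exact pow_le_pow_left₀ (norm_nonneg _) (hpb z hz) n
    have h2 := hqb z hz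
    have : (0:ℝ) ≤ (3+ρ)/(m * Complex.abs β) := by positivity
    calc ‖q z‖ * ‖p z ^ n‖ ≤ ((3+ρ)/(m * Complex.abs β)) * (1+ρ)^n := by
          apply mul_le_mul h2 h1 (norm_nonneg _) this
      _ = _ := rfl
  intro z hz
  have hmvt : ‖p z - p 0‖ ≤ ((3+ρ)/(m * Complex.abs β) * (1+ρ)^n) * ‖z - 0‖ := by
    apply Convex.norm_image_sub_le_of_norm_deriv_le
      (fun x hx => hp.differentiableAt (hopen.mem_nhds (hball hx))) hp'b
      (convex_ball 0 m) (Metric.mem_ball_self hm0) hz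
  rw [hp0, sub_zero] at hmvt
  have hzm : ‖z‖ ≤ m := by
    rw [Metric.mem_ball, dist_zero_right] at hz
    exact le_of_lt hz
  have hCnn : (0:ℝ) ≤ (3+ρ)/(m * Complex.abs β) * (1+ρ)^n := by positivity
  have step1 : Complex.abs (p z - 1) ≤ (3+ρ) * (1+ρ)^n / Complex.abs β := by
    calc Complex.abs (p z - 1) = ‖p z - 1‖ := rfl
      _ ≤ ((3+ρ)/(m * Complex.abs β) * (1+ρ)^n) * ‖z‖ := hmvt
      _ ≤ ((3+ρ)/(m * Complex.abs β) * (1+ρ)^n) * m := by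
          exact mul_le_mul_of_nonneg_left hzm hCnn
      _ = (3+ρ) * (1+ρ)^n / Complex.abs β := by
          field_simp
  -- numeric finish
  have hsplit : ((1:ℝ)+ρ)^n = (1+ρ)^(n-1) * (1+ρ) := by
    rw [← pow_succ]
    congr 1
    omega
  have hpow : ((1:ℝ)+ρ)^(n-1) ≤ (13/10:ℝ)^(n-1) :=
    pow_le_pow_left₀ (by linarith) (by linarith) _
  have hnum : (3+ρ) * (1+ρ)^n ≤ (3+ρ)*(1+ρ) * (13/10:ℝ)^(n-1) := by
    calc (3+ρ) * (1+ρ)^n = ((3+ρ)*(1+ρ))*(1+ρ)^(n-1) := by rw [hsplit]; ring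
      _ ≤ ((3+ρ)*(1+ρ))*(13/10:ℝ)^(n-1) :=
          mul_le_mul_of_nonneg_left hpow (by nlinarith)
      _ = (3+ρ)*(1+ρ) * (13/10:ℝ)^(n-1) := by ring
  have hfin : (3+ρ) * (1+ρ)^n / Complex.abs β ≤
      (3+ρ)*(1+ρ) * (13/10:ℝ)^(n-1) / ((83/4:ℝ) * (13/10:ℝ)^(n-1)) := by
    apply div_le_div₀ (by positivity) hnum (by positivity) hβ'
  have heq : (3+ρ)*(1+ρ) * (13/10:ℝ)^(n-1) / ((83/4:ℝ) * (13/10:ℝ)^(n-1)) =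
      (3+ρ)*(1+ρ)*4/83 := by
    have hk : ((13:ℝ)/10)^(n-1) ≠ 0 := by positivity
    field_simp
  linarith [step1, hfin, le_of_eq heq]

section main
variable (n : ℕ) (hn : 0 < n) (δ : ℕ) (hδ : δ = 0 ∨ δ = 1) (β : ℂ)
    (hβ' : (83/4:ℝ) * (13/10:ℝ)^(n-1) ≤ Complex.abs β)
    (p : ℂ → ℂ) (hp : DifferentiableOn ℂ p unitDisk) (hp0 : p 0 = 1)
    (hpne : ∀ z ∈ unitDisk, p z ≠ 0)
    (w₀ : ℂ → ℂ) (hw₀lt : ∀ z ∈ unitDisk, Complex.abs (w₀ z) < 1)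
    (hw₀eq : ∀ z ∈ unitDisk, p z ^ δ + β * (z * deriv p z) / p z ^ n = bean (w₀ z))

include hp hp0 in
lemma closure_bound (m : ℝ) (hm0 : 0 < m) (hm1 : m < 1) (c : ℝ)
    (hyp : ∀ z ∈ Metric.ball (0:ℂ) m, Complex.abs (p z - 1) ≤ c) :
    ∀ z : ℂ, Complex.abs z ≤ m → Complex.abs (p z - 1) ≤ c := by
  have hopen : IsOpen unitDisk := Metric.isOpen_ball
  intro z hzm
  have hzU : z ∈ unitDisk := by
    rw [unitDisk, Metric.mem_ball, dist_zero_right]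
    exact lt_of_le_of_lt hzm hm1
  have h1 : Filter.Tendsto (fun t : ℝ => (t : ℂ) * z) (nhdsWithin (1:ℝ) (Set.Iio 1)) (nhds z) := by
    have hc : ContinuousAt (fun t : ℝ => (t : ℂ) * z) 1 :=
      (Complex.continuous_ofReal.continuousAt).mul continuousAt_const
    have := hc.tendsto
    simp only [Complex.ofReal_one, one_mul] at this
    exact this.mono_left nhdsWithin_le_nhds
  have hpc : ContinuousAt p z := (hp.differentiableAt (hopen.mem_nhds hzU)).continuousAt
  have h2 : Filter.Tendsto (fun t : ℝ => Complex.abs (p ((t:ℂ) * z) - 1))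
      (nhdsWithin (1:ℝ) (Set.Iio 1)) (nhds (Complex.abs (p z - 1))) :=
    (Complex.continuous_abs.continuousAt.tendsto).comp
      (((hpc.tendsto).comp h1).sub tendsto_const_nhds)
  apply le_of_tendsto h2
  have hIoo : Set.Ioo (0:ℝ) 1 ∈ nhdsWithin (1:ℝ) (Set.Iio 1) :=
    Ioo_mem_nhdsLT (by norm_num)
  filter_upwards [hIoo] with t ht
  apply hyp
  rw [Metric.mem_ball, dist_zero_right]
  have : ‖((t:ℂ) * z)‖ = t * Complex.abs z := by
    rw [norm_mul]
    simp [abs_of_pos ht.1, Complex.norm_eq_abs]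
  rw [this]
  calc t * Complex.abs z ≤ t * m := by
        apply mul_le_mul_of_nonneg_left hzm (le_of_lt ht.1)
    _ < m := by nlinarith [ht.2]

include hn hδ hβ' hp hp0 hpne hw₀lt hw₀eq in
lemma global_bound : ∀ z ∈ unitDisk, Complex.abs (p z - 1) ≤ 3/10 := by
  have hopen : IsOpen unitDisk := Metric.isOpen_ball
  intro z₀ hz₀
  rcases eq_or_ne z₀ 0 with rfl | hz₀ne
  · simp [hp0]
    norm_num
  have hm₁0 : 0 < Complex.abs z₀ := Complex.abs.pos hz₀ne
  have hm₁1 : Complex.abs z₀ < 1 := by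
    rw [unitDisk, Metric.mem_ball, dist_zero_right] at hz₀
    exact hz₀
  set m₁ := Complex.abs z₀ with hm₁
  set E : Set ℝ := {r | r ∈ Set.Icc 0 m₁ ∧
    ∀ z : ℂ, Complex.abs z ≤ r → Complex.abs (p z - 1) ≤ 3/10} with hE
  have hE0 : (0:ℝ) ∈ E := by
    constructor
    · exact ⟨le_refl 0, le_of_lt hm₁0⟩
    · intro z hz
      have : z = 0 := by
        have := Complex.abs.nonneg z
        have hz0 : Complex.abs z = 0 := le_antisymm hz this
        exact Complex.abs.eq_zero.1 hz0
      rw [this, hp0]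
      norm_num
  have hEne : E.Nonempty := ⟨0, hE0⟩
  have hbdd : BddAbove E := ⟨m₁, fun r hr => hr.1.2⟩
  set M := sSup E with hM
  have hM0 : 0 ≤ M := le_csSup hbdd hE0
  have hMm₁ : M ≤ m₁ := csSup_le hEne fun r hr => hr.1.2
  have hM1 : M < 1 := lt_of_le_of_lt hMm₁ hm₁1
  have hME : ∀ z : ℂ, Complex.abs z ≤ M → Complex.abs (p z - 1) ≤ 3/10 := by
    rcases eq_or_lt_of_le hM0 with hMeq | hMpos
    · intro z hz
      have hz0 : z = 0 := by
        have h1 := Complex.abs.nonneg z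
        rw [← hMeq] at hz
        exact Complex.abs.eq_zero.1 (le_antisymm hz h1)
      rw [hz0, hp0]; norm_num
    · have hballbd : ∀ z ∈ Metric.ball (0:ℂ) M, Complex.abs (p z - 1) ≤ 3/10 := by
        intro z hz
        rw [Metric.mem_ball, dist_zero_right] at hz
        obtain ⟨r, hrE, hr⟩ := exists_lt_of_lt_csSup hEne hz
        exact hrE.2 z (le_of_lt hr)
      exact closure_bound p hp hp0 M hMpos hM1 (3/10) hballbd
  -- M = m₁
  have hMeqm₁ : M = m₁ := by
    by_contra hne
    have hMlt : M < m₁ := lt_of_le_of_ne hMm₁ hne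
    rcases eq_or_lt_of_le hM0 with hMeq | hMpos
    · -- M = 0 : use continuity at 0
      have hpc : ContinuousAt p 0 := by
        apply (hp.differentiableAt (hopen.mem_nhds ?_)).continuousAt
        rw [unitDisk]; simp
      rw [Metric.continuousAt_iff] at hpc
      obtain ⟨ε, hε, hδ'⟩ := hpc (3/10) (by norm_num)
      set r := min (ε/2) m₁ with hr
      have hrpos : 0 < r := lt_min (by linarith) hm₁0
      have hrE : r ∈ E := by
        constructor
        · exact ⟨le_of_lt hrpos, min_le_right _ _⟩
        · intro z hz
          have hd : dist z 0 < ε := by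
            rw [dist_zero_right]
            calc ‖z‖ ≤ r := hz
              _ ≤ ε/2 := min_le_left _ _
              _ < ε := by linarith
          have := hδ' hd
          rw [hp0, dist_eq_norm] at this
          exact le_of_lt this
      have := le_csSup hbdd hrE
      rw [← hM, ← hMeq] at this
      linarith
    · -- M > 0 : improvement + thickening
      have hyp' : ∀ z ∈ Metric.ball (0:ℂ) M, Complex.abs (p z - 1) ≤ 3/10 := by
        intro z hz
        rw [Metric.mem_ball, dist_zero_right] at hz
        exact hME z (le_of_lt hz)
      have himp := improvement n hn δ hδ β hβ' p hp hp0 hpne w₀ hw₀lt hw₀eq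
        (3/10) (by norm_num) (le_refl _) M hMpos hM1 hyp'
      have himp' : ∀ z : ℂ, Complex.abs z ≤ M → Complex.abs (p z - 1) ≤ (3+3/10)*(1+3/10)*4/83 :=
        closure_bound p hp hp0 M hMpos hM1 _ himp
      set U : Set ℂ := unitDisk ∩ (fun z => Complex.abs (p z - 1)) ⁻¹' (Set.Iio (3/10)) with hU
      have hUopen : IsOpen U := by
        apply ContinuousOn.isOpen_inter_preimage ?_ hopen isOpen_Iio
        exact Complex.continuous_abs.comp_continuousOn ((hp.continuousOn).sub continuousOn_const)
      have hsub : Metric.closedBall (0:ℂ) M ⊆ U := by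
        intro z hz
        rw [Metric.mem_closedBall, dist_zero_right] at hz
        constructor
        · rw [unitDisk, Metric.mem_ball, dist_zero_right]
          exact lt_of_le_of_lt hz hM1
        · have := himp' z hz
          simp only [Set.mem_preimage, Set.mem_Iio]
          calc Complex.abs (p z - 1) ≤ (3+3/10)*(1+3/10)*4/83 := this
            _ < 3/10 := by norm_num
      obtain ⟨ε, hε, hthick⟩ :=
        (isCompact_closedBall (0:ℂ) M).exists_cthickening_subset_open hUopen hsub
      set r' := min (M + ε/2) m₁ with hr'
      have hr'M : M < r' := lt_min (by linarith) hMlt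
      have hr'E : r' ∈ E := by
        constructor
        · exact ⟨by positivity, min_le_right _ _⟩
        · intro z hz
          have hzthick : z ∈ Metric.cthickening ε (Metric.closedBall (0:ℂ) M) := by
            rcases le_or_gt (Complex.abs z) M with hle | hgt
            · apply Metric.self_subset_cthickening
              rw [Metric.mem_closedBall, dist_zero_right]
              exact hle
            · set y : ℂ := ((M / Complex.abs z : ℝ) : ℂ) * z with hy
              have hzpos : 0 < Complex.abs z := lt_of_le_of_lt hM0 hgt
              have hyabs : Complex.abs y = M := by
                rw [hy, map_mul, Complex.abs_ofReal, _root_.abs_of_nonneg (by positivity : (0:ℝ) ≤ M / Complex.abs z)]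
                field_simp
              apply Metric.mem_cthickening_of_dist_le z y ε _ ?_ ?_
              · rw [Metric.mem_closedBall, dist_zero_right]
                rw [Complex.norm_eq_abs, hyabs]
              · have : z - y = ((1 - M / Complex.abs z : ℝ) : ℂ) * z := by
                  rw [hy]; push_cast; ring
                rw [dist_eq_norm, this, norm_mul, Complex.norm_real]
                rw [Real.norm_eq_abs, _root_.abs_of_nonneg (by
                  rw [sub_nonneg]
                  rw [div_le_one hzpos]
                  exact le_of_lt hgt)]
                have : (1 - M / Complex.abs z) * ‖z‖ = Complex.abs z - M := by
                  rw [Complex.norm_eq_abs]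
                  field_simp
                rw [this]
                have h1 : Complex.abs z ≤ r' := hz
                have h2 : r' ≤ M + ε/2 := min_le_left _ _
                linarith
          have hzU := hthick hzthick
          rw [hU] at hzU
          exact le_of_lt hzU.2
      have := le_csSup hbdd hr'E
      rw [← hM] at this
      linarith
  exact hME z₀ (by rw [hMeqm₁])
end main


lemma log_est {x : ℝ} (hx : 0 < x) (h1 : x ≤ 243/100) (h2 : x⁻¹ ≤ 243/100) :
    |Real.log x| ≤ 28/25 := by
  have key : ∀ y : ℝ, 0 < y → y ≤ 243/100 → Real.log y ≤ 28/25 := by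
    intro y hy hy'
    have hs : Real.sqrt y ≤ 39/25 := by
      calc Real.sqrt y ≤ Real.sqrt ((39/25)^2) := Real.sqrt_le_sqrt (by nlinarith)
        _ = 39/25 := Real.sqrt_sq (by norm_num)
    have hlog : Real.log y = 2 * Real.log (Real.sqrt y) := by
      rw [Real.log_sqrt (le_of_lt hy)]; ring
    have := Real.log_le_sub_one_of_pos (Real.sqrt_pos.2 hy)
    rw [hlog]
    linarith
  rw [abs_le]
  constructor
  · have := key x⁻¹ (by positivity) h2
    rw [Real.log_inv] at this
    linarith
  · exact key x hx h1

lemma final_subord (p : ℂ → ℂ) (hp : DifferentiableOn ℂ p unitDisk) (hp0 : p 0 = 1)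
    (h19 : ∀ z ∈ unitDisk, Complex.abs (p z - 1) ≤ 19/100) : Subord p bean := by
  have hopen : IsOpen unitDisk := Metric.isOpen_ball
  have hfacts : ∀ z ∈ unitDisk,
      81/100 ≤ (p z).re ∧ Complex.abs (p z ^ 2 - 1) ≤ 4161/10000 ∧
      (2 - p z ^ 2 ≠ 0) ∧ 0 < (p z ^ 2 / (2 - p z ^ 2)).re := by
    intro z hz
    set a := p z with ha
    have h1 : Complex.abs (a - 1) ≤ 19/100 := h19 z hz
    have hare : 81/100 ≤ a.re := by
      have h2 : |(a - 1).re| ≤ Complex.abs (a - 1) := Complex.abs_re_le_abs _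
      have h3 : (a - 1).re = a.re - 1 := by simp
      rw [h3] at h2
      have := abs_le.1 h2
      linarith [this.1]
    have hu : Complex.abs (a ^ 2 - 1) ≤ 4161/10000 := by
      have he : a ^ 2 - 1 = (a - 1) * (a + 1) := by ring
      rw [he, map_mul]
      have h4 : Complex.abs (a + 1) ≤ 219/100 := by
        calc Complex.abs (a + 1) = Complex.abs ((a - 1) + 2) := by ring_nf
          _ ≤ Complex.abs (a - 1) + Complex.abs 2 := Complex.abs.add_le _ _
          _ ≤ 19/100 + 2 := by
              have h5 : Complex.abs 2 = 2 := by norm_num [← Complex.norm_eq_abs]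
              linarith [h1]
          _ = 219/100 := by norm_num
      calc Complex.abs (a - 1) * Complex.abs (a + 1) ≤ (19/100) * (219/100) := by
            apply mul_le_mul h1 h4 (Complex.abs.nonneg _) (by norm_num)
        _ = 4161/10000 := by norm_num
    have h2u : 5839/10000 ≤ Complex.abs (2 - a ^ 2) := by
      have he : (2 : ℂ) - a ^ 2 = 1 + (-(a ^ 2 - 1)) := by ring
      rw [he]
      have h6 := Complex.abs.le_add 1 (-(a^2-1))
      rw [Complex.abs.map_neg] at h6
      have h7 : Complex.abs 1 = 1 := by norm_num
      linarith
    have h2une : (2 : ℂ) - a ^ 2 ≠ 0 := by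
      intro hc
      rw [hc] at h2u
      simp at h2u
      linarith
    have hvre : 0 < (a ^ 2 / (2 - a ^ 2)).re := by
      rw [Complex.div_re]
      have hnum : (a^2).re * ((2:ℂ) - a^2).re + (a^2).im * ((2:ℂ) - a^2).im
          = 1 - Complex.normSq (a^2 - 1) := by
        simp [Complex.normSq_apply, Complex.sub_re, Complex.sub_im]
        ring
      rw [← add_div, hnum]
      have hlt : Complex.normSq (a^2 - 1) < 1 := by
        rw [← Complex.sq_abs]
        nlinarith [Complex.abs.nonneg (a^2-1)]
      have hden : 0 < Complex.normSq ((2:ℂ) - a^2) := Complex.normSq_pos.2 h2une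
      exact div_pos (by linarith) hden
    exact ⟨hare, hu, h2une, hvre⟩
  refine ⟨fun z => Complex.log (p z ^ 2 / (2 - p z ^ 2)) / 2, ?_, ?_, ?_, ?_⟩
  · intro z hz
    obtain ⟨hare, hu, h2une, hvre⟩ := hfacts z hz
    have hpz : DifferentiableAt ℂ p z := hp.differentiableAt (hopen.mem_nhds hz)
    have hq : DifferentiableAt ℂ (fun z => p z ^ 2 / (2 - p z ^ 2)) z :=
      (hpz.pow 2).div ((differentiableAt_const 2).sub (hpz.pow 2)) h2une
    have hslit : p z ^ 2 / (2 - p z ^ 2) ∈ Complex.slitPlane :=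
      Complex.mem_slitPlane_iff.2 (Or.inl hvre)
    have hlog : DifferentiableAt ℂ Complex.log (p z ^ 2 / (2 - p z ^ 2)) :=
      Complex.differentiableAt_log hslit
    exact ((hlog.comp z hq).div_const 2).differentiableWithinAt
  · simp [hp0]
    norm_num [Complex.log_one]
  · -- |w z| < 1
    intro z hz
    obtain ⟨hare, hu, h2une, hvre⟩ := hfacts z hz
    set a := p z with ha
    set v := a ^ 2 / (2 - a ^ 2) with hv
    have hvne : v ≠ 0 := by
      intro hc; rw [hc] at hvre; simp at hvre
    have h2u : 5839/10000 ≤ Complex.abs (2 - a ^ 2) := by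
      have he : (2 : ℂ) - a ^ 2 = 1 + (-(a ^ 2 - 1)) := by ring
      rw [he]
      have h6 := Complex.abs.le_add 1 (-(a^2-1))
      rw [Complex.abs.map_neg] at h6
      have h7 : Complex.abs 1 = 1 := by norm_num
      linarith
    have h2uub : Complex.abs (2 - a ^ 2) ≤ 14161/10000 := by
      have he : (2 : ℂ) - a ^ 2 = 1 + (-(a ^ 2 - 1)) := by ring
      rw [he]
      calc Complex.abs (1 + (-(a^2-1))) ≤ Complex.abs 1 + Complex.abs (-(a^2-1)) :=
            Complex.abs.add_le _ _
        _ ≤ 1 + 4161/10000 := by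
            rw [Complex.abs.map_neg]
            have h7 : Complex.abs 1 = 1 := by norm_num
            linarith
        _ = 14161/10000 := by norm_num
    have haub : Complex.abs (a^2) ≤ 14161/10000 := by
      calc Complex.abs (a^2) = Complex.abs (1 + (a^2 - 1)) := by ring_nf
        _ ≤ Complex.abs 1 + Complex.abs (a^2-1) := Complex.abs.add_le _ _
        _ ≤ 1 + 4161/10000 := by
            have h7 : Complex.abs 1 = 1 := by norm_num
            linarith
        _ = 14161/10000 := by norm_num
    have halb : 5839/10000 ≤ Complex.abs (a^2) := by
      have h6 := Complex.abs.le_add 1 (a^2-1)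
      have h7 : Complex.abs 1 = 1 := by norm_num
      have h8 : (1 : ℂ) + (a^2 - 1) = a^2 := by ring
      rw [h8] at h6
      linarith
    have hvabs : Complex.abs v = Complex.abs (a^2) / Complex.abs (2 - a^2) := by
      rw [hv, map_div₀]
    have hvpos : 0 < Complex.abs v := Complex.abs.pos hvne
    have hvub : Complex.abs v ≤ 243/100 := by
      rw [hvabs, div_le_iff₀ (by linarith)]
      nlinarith
    have hvinv : (Complex.abs v)⁻¹ ≤ 243/100 := by
      rw [hvabs]
      rw [inv_div]
      rw [div_le_iff₀ (by linarith)]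
      nlinarith
    have hlogb : |Real.log (Complex.abs v)| ≤ 28/25 := log_est hvpos hvub hvinv
    have hargb : |Complex.arg v| ≤ Real.pi / 2 :=
      Complex.abs_arg_le_pi_div_two_iff.2 (le_of_lt hvre)
    have hπ : Real.pi ≤ 3.141593 := le_of_lt Real.pi_lt_d6
    have hlv : Complex.abs (Complex.log v) < 2 := by
      have hsq : Complex.abs (Complex.log v) ^ 2 =
          Real.log (Complex.abs v) ^ 2 + Complex.arg v ^ 2 := by
        rw [Complex.sq_abs, Complex.normSq_apply, Complex.log_re, Complex.log_im, Complex.norm_eq_abs]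
        ring
      have h9 : Real.log (Complex.abs v) ^ 2 ≤ (28/25)^2 := by
        nlinarith [abs_le.1 hlogb]
      have h10 : Complex.arg v ^ 2 ≤ (3.141593/2)^2 := by
        have := abs_le.1 hargb
        nlinarith
      nlinarith [Complex.abs.nonneg (Complex.log v)]
    show Complex.abs (Complex.log v / 2) < 1
    rw [map_div₀]
    have : Complex.abs 2 = 2 := by norm_num [← Complex.norm_eq_abs]
    rw [this]
    linarith
  · -- p z = bean (w z)
    intro z hz
    obtain ⟨hare, hu, h2une, hvre⟩ := hfacts z hz
    set a := p z with ha
    set v := a ^ 2 / (2 - a ^ 2) with hv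
    have hvne : v ≠ 0 := by
      intro hc; rw [hc] at hvre; simp at hvre
    set L := Complex.log v with hL
    set E₁ := Complex.exp (L / 2) with hE₁
    have hE₁ne : E₁ ≠ 0 := Complex.exp_ne_zero _
    have hE₁sq : E₁ * E₁ = v := by
      rw [hE₁, ← Complex.exp_add]
      rw [show L / 2 + L / 2 = L by ring]
      exact Complex.exp_log hvne
    have hvne1 : v + 1 ≠ 0 := by
      intro hc
      have : v = -1 := by linear_combination hc
      rw [this] at hvre
      simp at hvre
      linarith
    have hch : Complex.cosh (L/2) = (E₁ + E₁⁻¹) / 2 := by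
      rw [Complex.cosh, hE₁, ← Complex.exp_neg]
    have hsumne : E₁ + E₁⁻¹ ≠ 0 := by
      intro hc
      have h12 : E₁ * E₁ + 1 = 0 := by
        have h13' := congrArg (· * E₁) hc
        simp only [add_mul, zero_mul] at h13'
        rw [inv_mul_cancel₀ hE₁ne] at h13'
        linear_combination h13'
      rw [hE₁sq] at h12
      exact hvne1 (by linear_combination h12)
    have hchne : Complex.cosh (L/2) ≠ 0 := by
      rw [hch]
      exact div_ne_zero hsumne two_ne_zero
    have hane : a ≠ 0 := by
      intro hc
      rw [hc] at hare
      norm_num at hare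
    have hE₁sq' : E₁ * E₁ * (2 - a^2) = a^2 := by
      rw [hE₁sq, hv]
      field_simp
    have h13 : 1 + Complex.tanh (L/2) = Complex.exp (L/2) / Complex.cosh (L/2) := by
      rw [Complex.tanh_eq_sinh_div_cosh, ← Complex.cosh_add_sinh]
      field_simp
    have htanh : 1 + Complex.tanh (L/2) = a ^ 2 := by
      rw [h13, hch, ← hE₁]
      rw [div_eq_iff (div_ne_zero hsumne two_ne_zero)]
      field_simp [hE₁ne]
      linear_combination hE₁sq'
    show a = bean (Complex.log (a ^ 2 / (2 - a ^ 2)) / 2)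
    rw [bean]
    rw [show Complex.log (a ^ 2 / (2 - a ^ 2)) / 2 = L / 2 by rw [hL, hv]]
    rw [htanh]
    rw [show ((1:ℂ)/2) = ((2:ℂ))⁻¹ by norm_num]
    exact (Complex.sq_cpow_two_inv (by linarith : 0 < a.re)).symm

end helpers

theorem stmt_5 (n : ℕ) (hn : 0 < n) (δ : ℕ) (hδ : δ = 0 ∨ δ = 1) (β : ℂ)
    (hβ : (R₀ + ω₀ ^ δ) * (1 + Real.exp 1 ^ 2) ^ ((3 - (n : ℝ)) / 2) /
        (Real.sqrt 2 * Real.exp 1) ^ (1 - (n : ℝ)) ≤ ‖β‖)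
    (p : ℂ → ℂ) (hp : DifferentiableOn ℂ p unitDisk) (hp0 : p 0 = 1)
    (hpne : ∀ z ∈ unitDisk, p z ≠ 0)
    (hsub : Subord (fun z => p z ^ δ + β * (z * deriv p z) / p z ^ n) bean) :
    Subord p bean := by
  obtain ⟨w₀, hw₀d, hw₀0, hw₀lt, hw₀eq⟩ := hsub
  have hw₀eq' : ∀ z ∈ unitDisk, p z ^ δ + β * (z * deriv p z) / p z ^ n = bean (w₀ z) :=
    fun z hz => hw₀eq z hz
  have hβ' := beta_lower n hn δ hδ β hβ
  have hglob := global_bound n hn δ hδ β hβ' p hp hp0 hpne w₀ hw₀lt hw₀eq'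
  have himp2 : ∀ ρ : ℝ, 0 ≤ ρ → ρ ≤ 3/10 → (∀ z ∈ unitDisk, Complex.abs (p z - 1) ≤ ρ) →
      ∀ z ∈ unitDisk, Complex.abs (p z - 1) ≤ (3+ρ)*(1+ρ)*4/83 := by
    intro ρ hρ0 hρ hyp z hz
    have hz1 : Complex.abs z < 1 := by
      rw [unitDisk, Metric.mem_ball, dist_zero_right] at hz
      exact hz
    set m : ℝ := (Complex.abs z + 1)/2 with hm
    have hm0 : 0 < m := by positivity
    have hm1 : m < 1 := by
      rw [hm]; linarith
    have hzm : z ∈ Metric.ball (0:ℂ) m := by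
      rw [Metric.mem_ball, dist_zero_right]
      show ‖z‖ < m
      rw [hm, Complex.norm_eq_abs]
      linarith
    have hypm : ∀ z' ∈ Metric.ball (0:ℂ) m, Complex.abs (p z' - 1) ≤ ρ := by
      intro z' hz'
      apply hyp
      exact Metric.ball_subset_ball (le_of_lt hm1) hz'
    exact improvement n hn δ hδ β hβ' p hp hp0 hpne w₀ hw₀lt hw₀eq' ρ hρ0 hρ m hm0 hm1 hypm z hzm
  have h21 : ∀ z ∈ unitDisk, Complex.abs (p z - 1) ≤ 21/100 := by
    intro z hz
    have := himp2 (3/10) (by norm_num) (le_refl _) hglob z hz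
    linarith [this]
  have h19 : ∀ z ∈ unitDisk, Complex.abs (p z - 1) ≤ 19/100 := by
    intro z hz
    have := himp2 (21/100) (by norm_num) (by norm_num) h21 z hz
    linarith [this]
  exact final_subord p hp hp0 h19
end
end

section
/- Let n be a positive integer, δ ∈ {0, 1}, A, B real with −1 < B ≤ 0 < A ≤ 1, and β ∈ ℂ \ {0} with |β| ≥ ((1 + e²)^{3/2}/(√2 e))^n ((1 + A)/(1 + B) + ω₀^δ). If p ∈ ℋ satisfies (p(z))^δ + β (z p′(z))^n ≺ (1 + Az)/(1 + Bz), then p(z) ≺ 𝔅(z). -/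
open Complex

noncomputable section

lemma exp_sq_lb : (7.389 : ℝ) ≤ Real.exp 1 ^ 2 := by
  nlinarith [Real.exp_one_gt_d9]

lemma exp_sq_ub : Real.exp 1 ^ 2 ≤ (7.39 : ℝ) := by
  nlinarith [Real.exp_one_lt_d9, Real.exp_pos 1]

lemma cube_ineq : ∀ s : ℝ, 7.389 ≤ s → 72 * s ≤ (1 + s) ^ 3 := by
  intro s hs
  have h1 : (0:ℝ) ≤ s - 7.389 := by linarith
  nlinarith [mul_nonneg h1 h1, mul_nonneg (mul_nonneg h1 h1) h1]

lemma K_ge_six : (6:ℝ) ≤ (1 + Real.exp 1 ^ 2) ^ ((3:ℝ)/2) / (Real.sqrt 2 * Real.exp 1) := by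
  have he := Real.exp_pos 1
  have h2 : Real.sqrt 2 ^ 2 = 2 := Real.sq_sqrt (by norm_num)
  have h20 : 0 < Real.sqrt 2 := Real.sqrt_pos.2 (by norm_num)
  have hx0 : (0:ℝ) < 1 + Real.exp 1 ^ 2 := by positivity
  set X : ℝ := (1 + Real.exp 1 ^ 2) ^ ((3:ℝ)/2) with hX
  have hX0 : 0 ≤ X := Real.rpow_nonneg hx0.le _
  have hX2 : X ^ 2 = (1 + Real.exp 1 ^ 2) ^ 3 := by
    rw [hX, ← Real.rpow_natCast ((1 + Real.exp 1 ^ 2) ^ ((3:ℝ)/2)) 2,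
      ← Real.rpow_mul hx0.le, ← Real.rpow_natCast (1 + Real.exp 1 ^ 2) 3]
    norm_num
  rw [le_div_iff₀ (by positivity)]
  have h72 : 72 * Real.exp 1 ^ 2 ≤ (1 + Real.exp 1 ^ 2) ^ 3 := cube_ineq _ exp_sq_lb
  nlinarith [sq_nonneg (X - 6 * (Real.sqrt 2 * Real.exp 1)), mul_pos h20 he]

lemma cosh_re_add_im (x y : ℝ) : Complex.cosh ((x:ℂ) + (y:ℂ) * Complex.I) =
    ((Real.cosh x * Real.cos y : ℝ) : ℂ) + ((Real.sinh x * Real.sin y : ℝ) : ℂ) * Complex.I := by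
  rw [Complex.cosh_add, Complex.cosh_mul_I, Complex.sinh_mul_I,
    ← Complex.ofReal_cosh, ← Complex.ofReal_sinh, ← Complex.ofReal_cos, ← Complex.ofReal_sin]
  push_cast
  ring

lemma bean_circle_le (θ : ℝ) : ‖bean (Complex.exp (θ * Complex.I))‖ ≤ 3 := by
  set ζ : ℂ := Complex.exp (θ * Complex.I) with hζ
  have habs : ‖ζ‖ = 1 := by
    rw [hζ, Complex.norm_exp]
    simp
  have hre : |ζ.re| ≤ 1 := by
    simpa [habs] using Complex.abs_re_le_norm ζ
  have him : |ζ.im| ≤ 1 := by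
    simpa [habs] using Complex.abs_im_le_norm ζ
  have hsinh : ‖Complex.sinh ζ‖ ≤ Real.exp 1 := by
    have h1 : ‖Complex.exp ζ‖ ≤ Real.exp 1 := by
      rw [Complex.norm_exp]
      exact Real.exp_le_exp.2 (le_of_abs_le hre)
    have h2 : ‖Complex.exp (-ζ)‖ ≤ Real.exp 1 := by
      rw [Complex.norm_exp]
      simp only [Complex.neg_re]
      exact Real.exp_le_exp.2 (by linarith [(abs_le.1 hre).1])
    calc ‖Complex.sinh ζ‖ = ‖Complex.exp ζ - Complex.exp (-ζ)‖ / 2 := by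
          rw [Complex.sinh, norm_div]
          norm_num
      _ ≤ (‖Complex.exp ζ‖ + ‖Complex.exp (-ζ)‖) / 2 := by
          linarith [norm_sub_le (Complex.exp ζ) (Complex.exp (-ζ))]
      _ ≤ Real.exp 1 := by linarith
  have hcosh : (1/2 : ℝ) ≤ ‖Complex.cosh ζ‖ := by
    have hζeq : ζ = (ζ.re : ℂ) + (ζ.im : ℂ) * Complex.I := (Complex.re_add_im ζ).symm
    have hrecosh : (Complex.cosh ζ).re = Real.cosh ζ.re * Real.cos ζ.im := by
      conv_lhs => rw [hζeq, cosh_re_add_im]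
      simp only [Complex.add_re, Complex.ofReal_re, Complex.mul_re, Complex.ofReal_im,
        Complex.I_re, Complex.I_im]
      ring
    have hcos : (1/2 : ℝ) ≤ Real.cos ζ.im := by
      have h1 := Real.one_sub_sq_div_two_le_cos (x := ζ.im)
      have him2 : ζ.im ^ 2 ≤ 1 := by
        nlinarith [_root_.sq_abs ζ.im, abs_nonneg ζ.im]
      linarith
    have hch : 1 ≤ Real.cosh ζ.re := Real.one_le_cosh ζ.re
    calc (1/2 : ℝ) ≤ Real.cosh ζ.re * Real.cos ζ.im := by nlinarith
      _ = (Complex.cosh ζ).re := hrecosh.symm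
      _ ≤ ‖Complex.cosh ζ‖ := Complex.re_le_norm _
  have htanh : ‖1 + Complex.tanh ζ‖ ≤ 9 := by
    have htt : ‖Complex.tanh ζ‖ ≤ Real.exp 1 / (1/2) := by
      rw [Complex.tanh, norm_div]
      exact div_le_div₀ (by positivity) hsinh (by norm_num) hcosh
    calc ‖1 + Complex.tanh ζ‖ ≤ 1 + ‖Complex.tanh ζ‖ := by
          simpa using norm_add_le 1 (Complex.tanh ζ)
      _ ≤ 9 := by nlinarith [Real.exp_one_lt_d9]
  have hw : ((1:ℂ)/2) = (((1:ℝ)/2 : ℝ) : ℂ) := by norm_num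
  have h1 : ‖bean ζ‖ ≤ ‖1 + Complex.tanh ζ‖ ^ ((1:ℝ)/2) := by
    have h := Complex.norm_cpow_le (1 + Complex.tanh ζ) ((((1:ℝ)/2 : ℝ)) : ℂ)
    rw [Complex.ofReal_re, Complex.ofReal_im, mul_zero, Real.exp_zero, div_one] at h
    rw [bean, hw]
    exact h
  calc ‖bean ζ‖ ≤ ‖1 + Complex.tanh ζ‖ ^ ((1:ℝ)/2) := h1
    _ ≤ (9:ℝ) ^ ((1:ℝ)/2) := Real.rpow_le_rpow (by positivity) htanh (by norm_num)
    _ ≤ 3 := by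
        rw [show (9:ℝ) = 3 ^ (2:ℕ) by norm_num, ← Real.rpow_natCast 3 2, ← Real.rpow_mul]
        · norm_num
        · norm_num

lemma omega_ge : (1.32 : ℝ) ≤ ω₀ := by
  rw [ω₀]
  have hmem : ‖bean (Complex.exp ((0:ℝ) * Complex.I))‖ ∈
      ((fun θ : ℝ => ‖bean (Complex.exp (θ * Complex.I))‖) '' Set.Ico 0 (2 * Real.pi)) :=
    ⟨0, ⟨le_refl 0, by positivity⟩, rfl⟩
  have hbdd : BddAbove ((fun θ : ℝ => ‖bean (Complex.exp (θ * Complex.I))‖) ''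
      Set.Ico 0 (2 * Real.pi)) := by
    refine ⟨3, ?_⟩
    rintro a ⟨θ, -, rfl⟩
    exact bean_circle_le θ
  have hle := le_csSup hbdd hmem
  have h1 : (Complex.exp ((0:ℝ) * Complex.I)) = 1 := by simp
  have htanh1 : (1 : ℂ) + Complex.tanh 1 = ((1 + Real.tanh 1 : ℝ) : ℂ) := by
    push_cast [Complex.ofReal_tanh]
    norm_num
  have htanhpos : (0:ℝ) < 1 + Real.tanh 1 := by
    have : 0 < Real.tanh 1 := by
      rw [Real.tanh_eq_sinh_div_cosh]
      exact div_pos (by positivity) (Real.cosh_pos 1)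
    linarith
  have hval : ‖bean 1‖ = (1 + Real.tanh 1) ^ ((1:ℝ)/2) := by
    rw [bean, htanh1, Complex.norm_cpow_eq_rpow_re_of_pos htanhpos]
    norm_num
  rw [h1, hval] at hle
  have htanhlb : (0.7424 : ℝ) ≤ Real.tanh 1 := by
    rw [Real.tanh_eq_sinh_div_cosh, Real.sinh_eq, Real.cosh_eq, Real.exp_neg]
    have he := Real.exp_one_gt_d9
    have he2 : (0:ℝ) < Real.exp 1 := Real.exp_pos 1
    have hpos : (0:ℝ) < (Real.exp 1 + (Real.exp 1)⁻¹)/2 := by positivity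
    rw [le_div_iff₀ hpos]
    have hinv : Real.exp 1 * (Real.exp 1)⁻¹ = 1 := mul_inv_cancel₀ (ne_of_gt he2)
    nlinarith [inv_pos.2 he2]
  have hsq : ((1 + Real.tanh 1) ^ ((1:ℝ)/2)) ^ 2 = 1 + Real.tanh 1 := by
    rw [← Real.rpow_natCast ((1 + Real.tanh 1) ^ ((1:ℝ)/2)) 2, ← Real.rpow_mul htanhpos.le]
    norm_num
  nlinarith [hle, hsq, htanhlb, Real.rpow_nonneg htanhpos.le ((1:ℝ)/2),
    sq_nonneg ((1 + Real.tanh 1) ^ ((1:ℝ)/2) - 1.32)]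

/-- Key numeric bootstrap: from the self-improving inequality, `σ ≤ 1/6`. -/
lemma boot {n : ℕ} (hn : 0 < n) {K C W E b σ m : ℝ} (hK : 6 ≤ K) (hC : 1 ≤ C)
    (hσ : 0 < σ) (hb : K ^ n * (C + W) ≤ b) (heq : σ ^ n * b ≤ C + E)
    (hm : m ≤ 1 + σ)
    (hcase : (E = 1 ∧ W = 1) ∨ (E ≤ m ∧ (1.32 : ℝ) ≤ W)) : σ ≤ 1/6 := by
  have hn' : n ≠ 0 := hn.ne'
  have hσn : 0 < σ ^ n := pow_pos hσ n
  have hKσ : (K * σ) ^ n * (C + W) ≤ C + E := by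
    calc (K * σ) ^ n * (C + W) = σ ^ n * (K ^ n * (C + W)) := by rw [mul_pow]; ring
      _ ≤ σ ^ n * b := by
          exact mul_le_mul_of_nonneg_left hb hσn.le
      _ ≤ C + E := heq
  have hKσ0 : 0 < K * σ := by nlinarith
  -- helper: if (K*σ)^n ≤ c with 1 ≤ c then K*σ ≤ c
  have hpow : ∀ c : ℝ, 1 ≤ c → (K * σ) ^ n ≤ c → K * σ ≤ c := by
    intro c hc hle
    by_contra hgt
    push_neg at hgt
    have h1 : 1 ≤ K * σ := by linarith
    have := le_self_pow₀ h1 hn'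
    linarith
  rcases hcase with ⟨hE, hW⟩ | ⟨hE, hW⟩
  · -- δ = 0
    rw [hE, hW] at hKσ
    have h1 : (K * σ) ^ n ≤ 1 := by nlinarith
    have h2 : K * σ ≤ 1 := hpow 1 le_rfl h1
    nlinarith
  · -- δ = 1
    have hCW : 0 < C + W := by linarith
    have key : (K * σ) ^ n * (C + W) ≤ C + 1 + σ := by linarith
    -- step 1 : K * σ ≤ 1.3
    have hstep1 : K * σ ≤ 1.3 := by
      by_contra hgt
      push_neg at hgt
      have h1 : 1 ≤ K * σ := by linarith
      have h2 := le_self_pow₀ h1 hn'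
      have h3 : (K * σ) * (C + W) ≤ C + 1 + σ := by nlinarith
      have h4 : σ ≤ (K * σ) / 6 := by
        rw [le_div_iff₀ (by norm_num : (0:ℝ) < 6)]
        nlinarith
      nlinarith
    -- step 2 : now C + 1 + σ ≤ C + W
    have hσ3 : σ ≤ 1.3 / 6 := by nlinarith
    have h5 : C + 1 + σ ≤ C + W := by norm_num at hσ3 ⊢; linarith
    have h6 : (K * σ) ^ n ≤ 1 := by nlinarith
    have h7 : K * σ ≤ 1 := hpow 1 le_rfl h6
    nlinarith

lemma mem_unitDisk {z : ℂ} : z ∈ unitDisk ↔ ‖z‖ < 1 := by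
  simp [unitDisk, Metric.mem_ball, Complex.dist_eq]

set_option maxHeartbeats 1000000 in
lemma key_bound (n : ℕ) (hn : 0 < n) (δ : ℕ) (hδ : δ = 0 ∨ δ = 1)
    (A B : ℝ) (hB1 : -1 < B) (hB0 : B ≤ 0) (hA0 : 0 < A) (hA1 : A ≤ 1)
    (β : ℂ) (hβ0 : β ≠ 0)
    (hβ : ((1 + Real.exp 1 ^ 2) ^ ((3 : ℝ) / 2) / (Real.sqrt 2 * Real.exp 1)) ^ n *
        ((1 + A) / (1 + B) + ω₀ ^ δ) ≤ ‖β‖)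
    (p : ℂ → ℂ) (hp : DifferentiableOn ℂ p unitDisk) (hp0 : p 0 = 1)
    (hsub : Subord (fun z => p z ^ δ + β * (z * deriv p z) ^ n)
        (fun z => (1 + (A : ℂ) * z) / (1 + (B : ℂ) * z))) :
    ∀ z ∈ unitDisk, ‖p z - 1‖ ≤ 1/6 := by
  obtain ⟨w, hw_diff, hw0, hw_lt, hw_eq⟩ := hsub
  have hβpos : 0 < ‖β‖ := norm_pos_iff.mpr hβ0
  have hB0' : (0:ℝ) < 1 + B := by linarith
  have hC1 : (1:ℝ) ≤ (1+A)/(1+B) := by rw [le_div_iff₀ hB0']; linarith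
  intro z hz
  have hz1 : ‖z‖ < 1 := mem_unitDisk.1 hz
  have hzabs : 0 ≤ ‖z‖ := norm_nonneg z
  set r : ℝ := (‖z‖ + 1)/2 with hr
  have hr0 : 0 < r := by positivity
  have hrz : ‖z‖ ≤ r := by rw [hr]; linarith
  have hr1 : r < 1 := by rw [hr]; linarith
  have hsubset : Metric.closedBall (0:ℂ) r ⊆ unitDisk := by
    intro ζ hζ
    rw [Metric.mem_closedBall, Complex.dist_eq, sub_zero] at hζ
    exact mem_unitDisk.2 (lt_of_le_of_lt hζ hr1)
  have hball : Metric.ball (0:ℂ) r ⊆ unitDisk :=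
    fun ζ hζ => hsubset (Metric.ball_subset_closedBall hζ)
  -- maximum of |p| on the closed ball
  have hcont : ContinuousOn (fun ζ => ‖p ζ‖) (Metric.closedBall 0 r) :=
    continuous_norm.comp_continuousOn (hp.continuousOn.mono hsubset)
  obtain ⟨zs, hzs, hzmax'⟩ := (isCompact_closedBall (0:ℂ) r).exists_isMaxOn
    ⟨0, by simp [hr0.le]⟩ hcont
  have hzmax := isMaxOn_iff.mp hzmax' 
  set m : ℝ := ‖p zs‖ with hm
  have hm1 : 1 ≤ m := by
    have := hzmax 0 (by simp [hr0.le])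
    simpa [hp0] using this
  have hm0 : 0 < m := lt_of_lt_of_le one_pos hm1
  set C : ℝ := (1+A)/(1+B) with hCdef
  set E : ℝ := m ^ δ with hE
  have hE0 : 0 < E := pow_pos hm0 δ
  set S : ℝ := (C + E)/‖β‖ with hS
  have hS0 : 0 < S := by
    apply div_pos _ hβpos
    linarith
  set σ : ℝ := S ^ ((1:ℝ)/(n:ℝ)) with hσdef
  have hσ0 : 0 < σ := Real.rpow_pos_of_pos hS0 _
  have hn0 : (n:ℝ) ≠ 0 := Nat.cast_ne_zero.2 hn.ne'
  have hσn : σ ^ n = S := by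
    rw [hσdef, ← Real.rpow_natCast (S ^ ((1:ℝ)/(n:ℝ))) n, ← Real.rpow_mul hS0.le]
    rw [one_div_mul_cancel hn0, Real.rpow_one]
  -- the function H
  set H : ℂ → ℂ := fun ζ => ζ * deriv p ζ with hH
  have hHlt : ∀ ζ ∈ Metric.ball (0:ℂ) r, ‖H ζ‖ < σ := by
    intro ζ hζ
    have hζD : ζ ∈ unitDisk := hball hζ
    have heq := hw_eq ζ hζD
    have hwζ : ‖w ζ‖ < 1 := hw_lt ζ hζD
    have hden : (1:ℝ) + B ≤ ‖1 + (B:ℂ) * w ζ‖ := by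
      have h0 : ‖(B:ℂ) * w ζ‖ ≤ -B := by
        rw [norm_mul, Complex.norm_real, Real.norm_eq_abs, abs_of_nonpos hB0]
        exact mul_le_of_le_one_right (by linarith) hwζ.le
      have h1 := norm_sub_le (1 + (B:ℂ) * w ζ) ((B:ℂ) * w ζ)
      simp only [add_sub_cancel_right, norm_one] at h1
      linarith
    have hnum : ‖1 + (A:ℂ) * w ζ‖ < 1 + A := by
      have h0 : ‖(A:ℂ) * w ζ‖ < A := by
        rw [norm_mul, Complex.norm_real, Real.norm_eq_abs, abs_of_pos hA0]
        nlinarith [norm_nonneg (w ζ)]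
      have h1 := norm_add_le 1 ((A:ℂ) * w ζ)
      simp only [norm_one] at h1
      linarith
    have hdenpos : 0 < ‖1 + (B:ℂ) * w ζ‖ := lt_of_lt_of_le hB0' hden
    have hg : ‖(1 + (A:ℂ) * w ζ)/(1 + (B:ℂ) * w ζ)‖ < C := by
      rw [norm_div, hCdef]
      calc ‖1 + (A:ℂ) * w ζ‖ / ‖1 + (B:ℂ) * w ζ‖
          ≤ ‖1 + (A:ℂ) * w ζ‖ / (1+B) :=
            div_le_div_of_nonneg_left (norm_nonneg _) hB0' hden
        _ < (1+A)/(1+B) := by gcongr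
    have hpowδ : ‖p ζ ^ δ‖ ≤ E := by
      rw [norm_pow, hE]
      exact pow_le_pow_left₀ (norm_nonneg _)
        (hzmax ζ (Metric.ball_subset_closedBall hζ)) δ
    have hβh : ‖β‖ * ‖H ζ‖ ^ n < C + E := by
      have heqb : p ζ ^ δ + β * (ζ * deriv p ζ) ^ n
          = (1 + (A:ℂ) * w ζ)/(1 + (B:ℂ) * w ζ) := heq
      have hid : β * (H ζ) ^ n = (1 + (A:ℂ) * w ζ)/(1 + (B:ℂ) * w ζ) - p ζ ^ δ := by
        rw [← heqb, hH]; ring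
      calc ‖β‖ * ‖H ζ‖ ^ n = ‖β * (H ζ) ^ n‖ := by
            rw [← norm_pow, ← norm_mul]
        _ = ‖(1 + (A:ℂ) * w ζ)/(1 + (B:ℂ) * w ζ) - p ζ ^ δ‖ := by rw [hid]
        _ ≤ ‖(1 + (A:ℂ) * w ζ)/(1 + (B:ℂ) * w ζ)‖ + ‖p ζ ^ δ‖ :=
            norm_sub_le _ _
        _ < C + E := add_lt_add_of_lt_of_le hg hpowδ
    have hHn : ‖H ζ‖ ^ n < σ ^ n := by
      rw [hσn, hS, lt_div_iff₀ hβpos]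
      linarith [hβh]
    by_contra hge
    push_neg at hge
    exact absurd hHn (not_lt.2 (pow_le_pow_left₀ hσ0.le hge n))
  -- Schwarz lemma
  have hpa : AnalyticOnNhd ℂ p unitDisk := hp.analyticOnNhd Metric.isOpen_ball
  have hdc' : DifferentiableOn ℂ (deriv p) unitDisk := hpa.deriv.differentiableOn
  have hHdiff : DifferentiableOn ℂ H (Metric.ball 0 r) :=
    differentiableOn_id.mul (hdc'.mono hball)
  have hH0 : H 0 = 0 := by simp [hH]
  have hmaps : Set.MapsTo H (Metric.ball 0 r) (Metric.ball (H 0) σ) := by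
    intro ζ hζ
    rw [hH0, Metric.mem_ball, Complex.dist_eq, sub_zero]
    exact hHlt ζ hζ
  have hSch : ∀ ζ ∈ Metric.ball (0:ℂ) r, ‖H ζ‖ ≤ σ / r * ‖ζ‖ := by
    intro ζ hζ
    have := Complex.dist_le_div_mul_dist_of_mapsTo_ball hHdiff (hmaps.mono_right Metric.ball_subset_closedBall) hζ
    simpa [hH0, Complex.dist_eq] using this
  -- integral bound
  have hmain : ∀ ζ ∈ Metric.closedBall (0:ℂ) r,
      ‖p ζ - 1‖ ≤ σ * (‖ζ‖ / r) := by
    intro ζ hζmem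
    have hζr : ‖ζ‖ ≤ r := by
      rw [Metric.mem_closedBall, Complex.dist_eq, sub_zero] at hζmem
      exact hζmem
    have htζD : ∀ t : ℝ, 0 ≤ t → t ≤ 1 → ((t:ℂ) * ζ) ∈ unitDisk := by
      intro t ht0 ht1
      rw [mem_unitDisk, norm_mul, Complex.norm_real, Real.norm_eq_abs, _root_.abs_of_nonneg ht0]
      nlinarith [norm_nonneg ζ]
    have hderiv : ∀ t ∈ Set.uIcc (0:ℝ) 1,
        HasDerivAt (fun s : ℝ => p ((s:ℂ) * ζ)) (ζ * deriv p ((t:ℂ)*ζ)) t := by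
      intro t ht
      rw [Set.uIcc_of_le (by norm_num : (0:ℝ) ≤ 1)] at ht
      have hD : DifferentiableAt ℂ p ((t:ℂ)*ζ) :=
        hp.differentiableAt (Metric.isOpen_ball.mem_nhds (htζD t ht.1 ht.2))
      have h1 : HasDerivAt (fun y : ℂ => p (y * ζ)) (deriv p ((t:ℂ)*ζ) * ζ) (t:ℂ) :=
        HasDerivAt.comp (t:ℂ) hD.hasDerivAt (hasDerivAt_mul_const ζ)
      have h2 := h1.comp_ofReal
      rw [mul_comm] at h2
      exact h2
    have hcont2 : ContinuousOn (fun t : ℝ => ζ * deriv p ((t:ℂ)*ζ)) (Set.uIcc (0:ℝ) 1) := by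
      apply ContinuousOn.mul continuousOn_const
      apply (hpa.deriv.continuousOn).comp
      · exact (Complex.continuous_ofReal.mul continuous_const).continuousOn
      · intro t ht
        rw [Set.uIcc_of_le (by norm_num : (0:ℝ) ≤ 1)] at ht
        exact htζD t ht.1 ht.2
    have hint : IntervalIntegrable (fun t : ℝ => ζ * deriv p ((t:ℂ)*ζ))
        MeasureTheory.volume 0 1 := hcont2.intervalIntegrable
    have hFTC := intervalIntegral.integral_eq_sub_of_hasDerivAt hderiv hint
    have hval : p ((1:ℝ) * ζ : ℂ) - p ((0:ℝ) * ζ : ℂ) = p ζ - 1 := by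
      norm_num [hp0]
    have h1ae : ∀ᵐ t : ℝ, t ≠ (1:ℝ) := by
      rw [MeasureTheory.ae_iff]
      simpa [Set.setOf_eq_eq_singleton] using MeasureTheory.measure_singleton (1:ℝ)
    have hbnd : ∀ᵐ t : ℝ, t ∈ Set.uIoc (0:ℝ) 1 →
        ‖ζ * deriv p ((t:ℂ)*ζ)‖ ≤ σ * (‖ζ‖ / r) := by
      filter_upwards [h1ae] with t ht1 htI
      rw [Set.uIoc_of_le (by norm_num : (0:ℝ) ≤ 1)] at htI
      have ht0 : 0 < t := htI.1
      have ht1' : t < 1 := lt_of_le_of_ne htI.2 ht1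
      have htb : ((t:ℂ) * ζ) ∈ Metric.ball (0:ℂ) r := by
        rw [Metric.mem_ball, Complex.dist_eq, sub_zero, norm_mul, Complex.norm_real, Real.norm_eq_abs,
          _root_.abs_of_nonneg ht0.le]
        nlinarith [norm_nonneg ζ]
      have hS1 := hSch _ htb
      rw [hH] at hS1
      simp only [norm_mul, Complex.norm_real, Real.norm_eq_abs, _root_.abs_of_nonneg ht0.le] at hS1
      have : t * (‖ζ‖ * ‖deriv p ((t:ℂ)*ζ)‖)
          ≤ t * (σ * (‖ζ‖ / r)) := by
        calc t * (‖ζ‖ * ‖deriv p ((t:ℂ)*ζ)‖)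
            ≤ σ / r * (t * ‖ζ‖) := by rw [← mul_assoc]; exact hS1
          _ = t * (σ * (‖ζ‖ / r)) := by ring
      have hfin := le_of_mul_le_mul_left this ht0
      calc ‖ζ * deriv p ((t:ℂ)*ζ)‖ = ‖ζ‖ * ‖deriv p ((t:ℂ)*ζ)‖ := by
            rw [norm_mul]
        _ ≤ σ * (‖ζ‖ / r) := hfin
    have hnorm := intervalIntegral.norm_integral_le_of_norm_le_const_ae hbnd
    rw [hFTC] at hnorm
    rw [hval] at hnorm
    simpa using hnorm
  -- self-consistency and boot
  have hmσ : m ≤ 1 + σ := by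
    have h1 := hmain zs hzs
    have h2 : ‖zs‖ ≤ r := by
      rw [Metric.mem_closedBall, Complex.dist_eq, sub_zero] at hzs
      exact hzs
    have h3 : ‖zs‖ / r ≤ 1 := div_le_one_of_le₀ h2 hr0.le
    have h4 : σ * (‖zs‖ / r) ≤ σ :=
      mul_le_of_le_one_right hσ0.le h3
    have h5 : ‖p zs‖ ≤ ‖p zs - 1‖ + 1 := by
      have := norm_add_le (p zs - 1) 1
      simpa using this
    rw [hm]
    linarith
  have heq' : σ ^ n * ‖β‖ ≤ C + E := by
    rw [hσn, hS, div_mul_cancel₀ _ (ne_of_gt hβpos)]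
  have hcase : (E = 1 ∧ ω₀ ^ δ = 1) ∨ (E ≤ m ∧ (1.32 : ℝ) ≤ ω₀ ^ δ) := by
    rcases hδ with h | h
    · left; constructor <;> simp [hE, h]
    · right
      constructor
      · simp [hE, h]
      · rw [h, pow_one]; exact omega_ge
  have hσ6 : σ ≤ 1/6 := boot hn K_ge_six hC1 hσ0 hβ heq' hmσ hcase
  -- final bound
  have hfin := hmain z (by rw [Metric.mem_closedBall, Complex.dist_eq, sub_zero]; exact hrz)
  have h3 : ‖z‖ / r ≤ 1 := div_le_one_of_le₀ hrz hr0.le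
  nlinarith [hfin, mul_le_of_le_one_right hσ0.le h3]

set_option maxHeartbeats 1000000 in
lemma construct_subord (p : ℂ → ℂ) (hp : DifferentiableOn ℂ p unitDisk) (hp0 : p 0 = 1)
    (hbound : ∀ z ∈ unitDisk, ‖p z - 1‖ ≤ 1/6) : Subord p bean := by
  -- basic estimates
  have habs_u : ∀ z ∈ unitDisk, ‖p z ^ 2 - 1‖ ≤ 13/36 := by
    intro z hz
    have h1 := hbound z hz
    have h2 : p z ^ 2 - 1 = (p z - 1) * (p z + 1) := by ring
    have h3 : ‖p z + 1‖ ≤ 13/6 := by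
      have h4 : p z + 1 = (p z - 1) + 2 := by ring
      rw [h4]
      calc ‖(p z - 1) + 2‖ ≤ ‖p z - 1‖ + ‖2‖ :=
            norm_add_le _ _
        _ ≤ 13/6 := by
            have h5 : ‖(2:ℂ)‖ = 2 := by norm_num [Complex.norm_two]
            rw [h5]; linarith
    rw [h2, norm_mul]
    calc ‖p z - 1‖ * ‖p z + 1‖ ≤ (1/6) * (13/6) :=
          mul_le_mul h1 h3 (norm_nonneg _) (by norm_num)
      _ = 13/36 := by norm_num
  have habs_sq_lb : ∀ z ∈ unitDisk, (23/36 : ℝ) ≤ ‖p z ^ 2‖ := by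
    intro z hz
    have h1 := habs_u z hz
    have h2 : (1:ℝ) ≤ ‖p z ^ 2‖ + ‖p z ^ 2 - 1‖ := by
      have := norm_sub_le (p z ^ 2) (p z ^ 2 - 1)
      simpa using this
    linarith
  have habs_sq_ub : ∀ z ∈ unitDisk, ‖p z ^ 2‖ ≤ 49/36 := by
    intro z hz
    have h1 := habs_u z hz
    have h2 : p z ^ 2 = (p z ^ 2 - 1) + 1 := by ring
    rw [h2]
    calc ‖(p z ^ 2 - 1) + 1‖ ≤ ‖p z ^ 2 - 1‖ + ‖1‖ :=
          norm_add_le _ _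
      _ ≤ 49/36 := by rw [norm_one]; linarith
  have habs_den_lb : ∀ z ∈ unitDisk, (23/36 : ℝ) ≤ ‖2 - p z ^ 2‖ := by
    intro z hz
    have h1 := habs_u z hz
    have h2 : (2:ℂ) - p z ^ 2 = 1 - (p z ^ 2 - 1) := by ring
    rw [h2]
    have h3 : (1:ℝ) ≤ ‖1 - (p z ^ 2 - 1)‖ + ‖p z ^ 2 - 1‖ := by
      have := norm_add_le (1 - (p z ^ 2 - 1)) (p z ^ 2 - 1)
      simpa using this
    linarith
  have habs_den_ub : ∀ z ∈ unitDisk, ‖2 - p z ^ 2‖ ≤ 49/36 := by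
    intro z hz
    have h1 := habs_u z hz
    have h2 : (2:ℂ) - p z ^ 2 = 1 - (p z ^ 2 - 1) := by ring
    rw [h2]
    calc ‖1 - (p z ^ 2 - 1)‖ ≤ ‖1‖ + ‖p z ^ 2 - 1‖ :=
          norm_sub_le _ _
      _ ≤ 49/36 := by rw [norm_one]; linarith
  have hsq_ne : ∀ z ∈ unitDisk, (2:ℂ) - p z ^ 2 ≠ 0 := by
    intro z hz h0
    have h1 := habs_den_lb z hz
    rw [h0] at h1
    simp at h1
    linarith
  have hp_ne : ∀ z ∈ unitDisk, p z ^ 2 ≠ 0 := by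
    intro z hz h0
    have h1 := habs_sq_lb z hz
    rw [h0] at h1
    simp at h1
    linarith
  -- v and its properties
  have hv_ne : ∀ z ∈ unitDisk, p z ^ 2 / (2 - p z ^ 2) ≠ 0 :=
    fun z hz => div_ne_zero (hp_ne z hz) (hsq_ne z hz)
  have hv_lb : ∀ z ∈ unitDisk, (23/49 : ℝ) ≤ ‖p z ^ 2 / (2 - p z ^ 2)‖ := by
    intro z hz
    rw [norm_div]
    rw [le_div_iff₀ (lt_of_lt_of_le (by norm_num) (habs_den_lb z hz))]
    calc (23/49 : ℝ) * ‖2 - p z ^ 2‖ ≤ (23/49) * (49/36) := by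
          have := habs_den_ub z hz
          nlinarith
      _ ≤ ‖p z ^ 2‖ := by
          have := habs_sq_lb z hz
          nlinarith
  have hv_ub : ∀ z ∈ unitDisk, ‖p z ^ 2 / (2 - p z ^ 2)‖ ≤ 49/23 := by
    intro z hz
    rw [norm_div]
    rw [div_le_iff₀ (lt_of_lt_of_le (by norm_num) (habs_den_lb z hz))]
    calc ‖p z ^ 2‖ ≤ 49/36 := habs_sq_ub z hz
      _ ≤ (49/23) * (23/36) := by norm_num
      _ ≤ (49/23) * ‖2 - p z ^ 2‖ := by
          have := habs_den_lb z hz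
          nlinarith
  have hv_re : ∀ z ∈ unitDisk, 0 < (p z ^ 2 / (2 - p z ^ 2)).re := by
    intro z hz
    have h1 := habs_u z hz
    rw [Complex.div_re]
    have hns : 0 < Complex.normSq (2 - p z ^ 2) :=
      Complex.normSq_pos.2 (hsq_ne z hz)
    have hN : (p z ^ 2).re * ((2:ℂ) - p z ^ 2).re + (p z ^ 2).im * ((2:ℂ) - p z ^ 2).im
        = 1 - Complex.normSq (p z ^ 2 - 1) := by
      simp only [Complex.normSq_apply, Complex.sub_re, Complex.sub_im, Complex.one_re,
        Complex.one_im, Complex.re_ofNat, Complex.im_ofNat]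
      ring
    have hNS : Complex.normSq (p z ^ 2 - 1) ≤ (13/36)^2 := by
      rw [← Complex.sq_norm]
      nlinarith [norm_nonneg (p z ^ 2 - 1)]
    have hNpos : 0 < (p z ^ 2).re * ((2:ℂ) - p z ^ 2).re
        + (p z ^ 2).im * ((2:ℂ) - p z ^ 2).im := by
      rw [hN]; nlinarith
    have e1 : (p z ^ 2).re * ((2:ℂ) - p z ^ 2).re / Complex.normSq (2 - p z ^ 2)
        + (p z ^ 2).im * ((2:ℂ) - p z ^ 2).im / Complex.normSq (2 - p z ^ 2)
        = ((p z ^ 2).re * ((2:ℂ) - p z ^ 2).re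
          + (p z ^ 2).im * ((2:ℂ) - p z ^ 2).im) / Complex.normSq (2 - p z ^ 2) := by
      ring
    rw [e1]
    exact div_pos hNpos hns
  have hv_slit : ∀ z ∈ unitDisk, (p z ^ 2 / (2 - p z ^ 2)) ∈ Complex.slitPlane :=
    fun z hz => Or.inl (hv_re z hz)
  -- define w
  set W : ℂ → ℂ := fun z => (1/2 : ℂ) * Complex.log (p z ^ 2 / (2 - p z ^ 2)) with hW
  refine ⟨W, ?_, ?_, ?_, ?_⟩
  · -- differentiability
    intro z hz
    have hpz : DifferentiableAt ℂ p z :=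
      hp.differentiableAt (Metric.isOpen_ball.mem_nhds hz)
    have hvz : DifferentiableAt ℂ (fun z => p z ^ 2 / (2 - p z ^ 2)) z :=
      DifferentiableAt.div (hpz.pow 2) ((differentiableAt_const 2).sub (hpz.pow 2))
        (hsq_ne z hz)
    have hlog : DifferentiableAt ℂ (fun z => Complex.log (p z ^ 2 / (2 - p z ^ 2))) z :=
      hvz.clog (hv_slit z hz)
    exact ((differentiableAt_const _).mul hlog).differentiableWithinAt
  · -- W 0 = 0
    rw [hW]
    norm_num [hp0, Complex.log_one]
  · -- |W z| < 1
    intro z hz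
    rw [hW]
    set v : ℂ := p z ^ 2 / (2 - p z ^ 2) with hv
    have hv0 : 0 < ‖v‖ := lt_of_lt_of_le (by norm_num) (hv_lb z hz)
    have hL2 : (‖Complex.log v‖)^2
        = (Real.log (‖v‖))^2 + (Complex.arg v)^2 := by
      rw [Complex.sq_norm, Complex.normSq_apply, Complex.log_re, Complex.log_im]
      ring
    have hlog_ub : Real.log (‖v‖) ≤ 1 := by
      rw [Real.log_le_iff_le_exp hv0]
      calc ‖v‖ ≤ 49/23 := hv_ub z hz
        _ ≤ Real.exp 1 := by nlinarith [Real.exp_one_gt_d9]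
    have hlog_lb : (-1 : ℝ) ≤ Real.log (‖v‖) := by
      rw [Real.le_log_iff_exp_le hv0]
      have h1 : Real.exp (-1) = (Real.exp 1)⁻¹ := Real.exp_neg 1
      have h2 := Real.exp_one_gt_d9
      have h3 : (0:ℝ) < Real.exp 1 := Real.exp_pos 1
      have h4 : (Real.exp 1)⁻¹ ≤ 23/49 := by
        rw [inv_le_comm₀ h3 (by norm_num)]
        linarith
      calc Real.exp (-1) = (Real.exp 1)⁻¹ := h1
        _ ≤ 23/49 := h4
        _ ≤ ‖v‖ := hv_lb z hz
    have harg : |Complex.arg v| ≤ Real.pi/2 :=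
      Complex.abs_arg_le_pi_div_two_iff.2 (hv_re z hz).le
    have hpi := Real.pi_lt_d2
    have hpi0 := Real.pi_pos
    have hL2b : (‖Complex.log v‖)^2 < 4 := by
      rw [hL2]
      have h1 : (Real.log (‖v‖))^2 ≤ 1 := by nlinarith
      have h2 : (Complex.arg v)^2 ≤ (Real.pi/2)^2 := by
        nlinarith [_root_.sq_abs (Complex.arg v), abs_nonneg (Complex.arg v)]
      nlinarith
    have hLlt : ‖Complex.log v‖ < 2 := by
      nlinarith [norm_nonneg (Complex.log v)]
    rw [norm_mul]
    have h12 : ‖(1/2 : ℂ)‖ = 1/2 := by norm_num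
    rw [h12]
    linarith
  · -- p z = bean (W z)
    intro z hz
    set v : ℂ := p z ^ 2 / (2 - p z ^ 2) with hv
    have hv0 : v ≠ 0 := hv_ne z hz
    have hden := hsq_ne z hz
    have hq0 := hp_ne z hz
    set s : ℂ := Complex.exp (W z) with hs
    have hs0 : s ≠ 0 := Complex.exp_ne_zero _
    have hs2 : s * s = v := by
      rw [hs, ← Complex.exp_add, hW]
      have : (1/2 : ℂ) * Complex.log v + (1/2 : ℂ) * Complex.log v = Complex.log v := by ring
      rw [this, Complex.exp_log hv0]
    have hv1 : v + 1 ≠ 0 := by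
      intro h
      have h1 : (v + 1).re = 0 := by rw [h]; simp
      have h2 := hv_re z hz
      rw [Complex.add_re, Complex.one_re] at h1
      rw [← hv] at h2
      linarith
    have h2s : (2:ℂ)*s ≠ 0 := mul_ne_zero two_ne_zero hs0
    have hss : s⁻¹ * s = 1 := inv_mul_cancel₀ hs0
    have hcosh : Complex.cosh (W z) = (v + 1)/(2*s) := by
      have h1 : Complex.cosh (W z) = (Complex.exp (W z) + Complex.exp (-W z))/2 := rfl
      rw [h1, Complex.exp_neg, ← hs, div_eq_div_iff two_ne_zero h2s]
      linear_combination (2:ℂ) * hs2 + 2 * hss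
    have hsinh : Complex.sinh (W z) = (v - 1)/(2*s) := by
      have h1 : Complex.sinh (W z) = (Complex.exp (W z) - Complex.exp (-W z))/2 := rfl
      rw [h1, Complex.exp_neg, ← hs, div_eq_div_iff two_ne_zero h2s]
      linear_combination (2:ℂ) * hs2 - 2 * hss
    have htanh : Complex.tanh (W z) = (v - 1)/(v + 1) := by
      rw [Complex.tanh_eq_sinh_div_cosh, hsinh, hcosh, div_div_div_comm,
        div_self h2s, div_one]
    have hveq : v * (2 - p z ^ 2) = p z ^ 2 := by
      rw [hv]; field_simp
    have hone_tanh : 1 + Complex.tanh (W z) = p z ^ 2 := by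
      rw [htanh, add_div' _ _ _ hv1, div_eq_iff hv1]
      linear_combination hveq
    -- now bean (W z) = (p z ^ 2) ^ (1/2) = p z
    have hbean : bean (W z) = Complex.exp (Complex.log (p z ^ 2) * (1/2 : ℂ)) := by
      rw [bean, hone_tanh, Complex.cpow_def_of_ne_zero hq0]
    set Q : ℂ := Complex.exp (Complex.log (p z ^ 2) * (1/2 : ℂ)) with hQ
    have hQ2 : Q * Q = p z ^ 2 := by
      rw [hQ, ← Complex.exp_add]
      have h1 : Complex.log (p z ^ 2) * (1/2 : ℂ) + Complex.log (p z ^ 2) * (1/2 : ℂ)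
          = Complex.log (p z ^ 2) := by ring
      rw [h1, Complex.exp_log hq0]
    -- Re (p z ^ 2) > 0
    have hq2re : 0 < (p z ^ 2).re := by
      have h1 := habs_u z hz
      have h2 : -(‖p z ^ 2 - 1‖) ≤ (p z ^ 2 - 1).re :=
        (abs_le.1 (Complex.abs_re_le_norm _)).1
      have h3 : (p z ^ 2).re = 1 + (p z ^ 2 - 1).re := by
        simp [Complex.sub_re]
      rw [h3]; linarith
    -- Re Q > 0
    have hQre : 0 < Q.re := by
      rw [hQ, Complex.exp_re]
      apply mul_pos (Real.exp_pos _)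
      apply Real.cos_pos_of_mem_Ioo
      have harg : |Complex.arg (p z ^ 2)| < Real.pi/2 :=
        Complex.abs_arg_lt_pi_div_two_iff.2 (Or.inl hq2re)
      have him : (Complex.log (p z ^ 2) * (1/2 : ℂ)).im = Complex.arg (p z ^ 2) / 2 := by
        simp [Complex.mul_im, Complex.log_im]
        ring
      rw [him]
      have hpi0 := Real.pi_pos
      constructor
      · have := (abs_lt.1 harg).1
        linarith
      · have := (abs_lt.1 harg).2
        linarith
    -- Re (p z) > 0
    have hpre : 0 < (p z).re := by
      have h1 := hbound z hz
      have h2 : -(‖p z - 1‖) ≤ (p z - 1).re :=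
        (abs_le.1 (Complex.abs_re_le_norm _)).1
      have h3 : (p z).re = 1 + (p z - 1).re := by simp [Complex.sub_re]
      rw [h3]; linarith
    -- conclude Q = p z
    have hfactor : (Q - p z) * (Q + p z) = 0 := by
      have : (Q - p z) * (Q + p z) = Q * Q - p z ^ 2 := by ring
      rw [this, hQ2, sub_self]
    rcases mul_eq_zero.1 hfactor with h | h
    · have : Q = p z := by linear_combination h
      rw [hbean, this]
    · exfalso
      have : Q = -p z := by linear_combination h
      have h4 : Q.re = -(p z).re := by rw [this]; simp
      linarith

theorem stmt_7 (n : ℕ) (hn : 0 < n) (δ : ℕ) (hδ : δ = 0 ∨ δ = 1)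
    (A B : ℝ) (hB1 : -1 < B) (hB0 : B ≤ 0) (hA0 : 0 < A) (hA1 : A ≤ 1)
    (β : ℂ) (hβ0 : β ≠ 0)
    (hβ : ((1 + Real.exp 1 ^ 2) ^ ((3 : ℝ) / 2) / (Real.sqrt 2 * Real.exp 1)) ^ n *
        ((1 + A) / (1 + B) + ω₀ ^ δ) ≤ ‖β‖)
    (p : ℂ → ℂ) (hp : DifferentiableOn ℂ p unitDisk) (hp0 : p 0 = 1)
    (hsub : Subord (fun z => p z ^ δ + β * (z * deriv p z) ^ n)
        (fun z => (1 + (A : ℂ) * z) / (1 + (B : ℂ) * z))) :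
    Subord p bean := by
  exact construct_subord p hp hp0
    (key_bound n hn δ hδ A B hB1 hB0 hA0 hA1 β hβ0 hβ p hp hp0 hsub)
end
end
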